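/- Let C, C₁, r₀ > 0 and let λ : [r₀, ∞) → ℝ be differentiable with 0 ≤ λ(r) ≤ C₁ and 1 - C·e^{-2r} ≤ λ'(r) + λ(r)² ≤ 1 + C·e^{-2r} for all r ≥ r₀. Then for every β' ∈ (0,1) there is a constant C₂ such that |λ(r) - 1| ≤ C₂·e^{-β' r} for all r ≥ r₀. -/

import Mathlib

open Real

/-- First (weaker) decay estimate of Lemma 2.2: a bounded solution of the Riccati
inequality `1 - Ce^{-2r} ≤ λ' + λ² ≤ 1 + Ce^{-2r}` with `0 ≤ λ ≤ C₁` satisfies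
`|λ(r) - 1| ≤ C₂ e^{-β' r}` for every `β' ∈ (0,1)`. -/
theorem riccati_weak_decay (C C₁ r₀ : ℝ) (hC : 0 < C) (hC₁ : 0 < C₁) (hr₀ : 0 < r₀)
    (lam : ℝ → ℝ) (hdiff : ∀ r ≥ r₀, DifferentiableAt ℝ lam r)
    (hbound : ∀ r ≥ r₀, 0 ≤ lam r ∧ lam r ≤ C₁)
    (hineq : ∀ r ≥ r₀,
      1 - C * Real.exp (-2 * r) ≤ deriv lam r + (lam r) ^ 2 ∧
      deriv lam r + (lam r) ^ 2 ≤ 1 + C * Real.exp (-2 * r)) :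
    ∀ β' ∈ Set.Ioo (0 : ℝ) 1, ∃ C₂ : ℝ, ∀ r ≥ r₀,
      |lam r - 1| ≤ C₂ * Real.exp (-β' * r) := by
  rintro β' ⟨hβ0, hβ1⟩
  set M : ℝ := C₁ + 1 with hM
  have hMpos : (0:ℝ) < M := by positivity
  have h1β : (0:ℝ) < 1 - β' := by linarith
  set K : ℝ := M * C / (1 - β') with hK
  have hKpos : 0 < K := by positivity
  set g : ℝ → ℝ := fun r => (lam r - 1)^2 * Real.exp (2*β'*r)
      + K * Real.exp (-(2*(1-β'))*r) with hg
  -- HasDerivAt for g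
  have hgD : ∀ r ≥ r₀, HasDerivAt g
      ((2*(lam r - 1)*deriv lam r) * Real.exp (2*β'*r)
        + (lam r - 1)^2 * (Real.exp (2*β'*r) * (2*β'))
        + K * (Real.exp (-(2*(1-β'))*r) * (-(2*(1-β'))))) r := by
    intro r hr
    have h1 : HasDerivAt (fun r => lam r - 1) (deriv lam r) r :=
      ((hdiff r hr).hasDerivAt).sub_const 1
    have h2 : HasDerivAt (fun r => (lam r - 1)^2) (2*(lam r - 1)*deriv lam r) r := by
      have := h1.fun_pow 2
      simpa [mul_comm, mul_assoc, mul_left_comm] using this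
    have h3 : HasDerivAt (fun r : ℝ => Real.exp (2*β'*r))
        (Real.exp (2*β'*r) * (2*β')) r := by
      have : HasDerivAt (fun r : ℝ => 2*β'*r) (2*β') r := by
        simpa using (hasDerivAt_id r).const_mul (2*β')
      simpa using this.exp
    have h4 : HasDerivAt (fun r : ℝ => Real.exp (-(2*(1-β'))*r))
        (Real.exp (-(2*(1-β'))*r) * (-(2*(1-β')))) r := by
      have : HasDerivAt (fun r : ℝ => -(2*(1-β'))*r) (-(2*(1-β'))) r := by
        simpa using (hasDerivAt_id r).const_mul (-(2*(1-β')))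
      simpa using this.exp
    have := (h2.mul h3).add (h4.const_mul K)
    exact this
  -- deriv g nonpositive
  have hderiv : ∀ r ≥ r₀, deriv g r ≤ 0 := by
    intro r hr
    rw [(hgD r hr).deriv]
    obtain ⟨hl0, hl1⟩ := hbound r hr
    obtain ⟨hi1, hi2⟩ := hineq r hr
    have hE : (0:ℝ) < Real.exp (-2*r) := Real.exp_pos _
    have hE2 : (0:ℝ) < Real.exp (2*β'*r) := Real.exp_pos _
    -- key: 2 u u' + 2β' u² ≤ 2 M C e^{-2r}
    have key : 2*(lam r - 1)*deriv lam r + 2*β'*(lam r - 1)^2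
        ≤ 2*M*C*Real.exp (-2*r) := by
      have hu2 : lam r - 1 ≤ M := by simp only [hM]; linarith
      have hu1 : -M ≤ lam r - 1 := by simp only [hM]; linarith
      nlinarith [mul_nonneg (sq_nonneg (lam r - 1)) (by linarith : (0:ℝ) ≤ lam r + 1 - β'),
        mul_nonneg (by linarith : (0:ℝ) ≤ M - (lam r - 1))
          (by linarith : (0:ℝ) ≤ C*Real.exp (-2*r) + (deriv lam r + (lam r)^2 - 1)),
        mul_nonneg (by linarith : (0:ℝ) ≤ M + (lam r - 1))
          (by linarith : (0:ℝ) ≤ C*Real.exp (-2*r) - (deriv lam r + (lam r)^2 - 1))]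
    have hexp : Real.exp (-(2*(1-β'))*r) = Real.exp (-2*r) * Real.exp (2*β'*r) := by
      rw [← Real.exp_add]; ring_nf
    have hKeq : K * (2*(1-β')) = 2*M*C := by
      rw [hK, div_mul_eq_mul_div, div_eq_iff h1β.ne']; ring
    have : (2*(lam r - 1)*deriv lam r + 2*β'*(lam r - 1)^2) * Real.exp (2*β'*r)
        ≤ (2*M*C*Real.exp (-2*r)) * Real.exp (2*β'*r) :=
      mul_le_mul_of_nonneg_right key hE2.le
    calc (2*(lam r - 1)*deriv lam r) * Real.exp (2*β'*r)
        + (lam r - 1)^2 * (Real.exp (2*β'*r) * (2*β'))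
        + K * (Real.exp (-(2*(1-β'))*r) * (-(2*(1-β'))))
        = (2*(lam r - 1)*deriv lam r + 2*β'*(lam r - 1)^2) * Real.exp (2*β'*r)
          - K * (2*(1-β')) * Real.exp (-(2*(1-β'))*r) := by ring
      _ ≤ (2*M*C*Real.exp (-2*r)) * Real.exp (2*β'*r)
          - 2*M*C * (Real.exp (-2*r) * Real.exp (2*β'*r)) := by
          rw [hKeq, hexp]; linarith
      _ = 0 := by ring
  -- g antitone on Ici r₀
  have hanti : AntitoneOn g (Set.Ici r₀) := by
    apply antitoneOn_of_deriv_nonpos (convex_Ici r₀)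
    · exact fun r hr => ((hgD r hr).differentiableAt.continuousAt).continuousWithinAt
    · intro r hr
      rw [interior_Ici] at hr
      exact (hgD r (le_of_lt hr)).differentiableAt.differentiableWithinAt
    · intro r hr
      rw [interior_Ici] at hr
      exact hderiv r (le_of_lt hr)
  have hg0 : 0 ≤ g r₀ := by
    have := Real.exp_pos (2*β'*r₀)
    have := Real.exp_pos (-(2*(1-β'))*r₀)
    have := sq_nonneg (lam r₀ - 1)
    simp only [hg]
    nlinarith
  refine ⟨Real.sqrt (g r₀), fun r hr => ?_⟩
  have hle : g r ≤ g r₀ := hanti (Set.self_mem_Ici) hr hr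
  have h2 : (lam r - 1)^2 * Real.exp (2*β'*r) ≤ g r₀ := by
    have hp : 0 < K * Real.exp (-(2*(1-β'))*r) := by positivity
    have h' : (lam r - 1)^2 * Real.exp (2*β'*r) ≤ g r := by
      have heq : g r = (lam r - 1)^2 * Real.exp (2*β'*r)
          + K * Real.exp (-(2*(1-β'))*r) := rfl
      rw [heq]; linarith
    exact h'.trans hle
  have h3 : (lam r - 1)^2 ≤ (Real.sqrt (g r₀) * Real.exp (-β'*r))^2 := by
    have hsq : (Real.sqrt (g r₀))^2 = g r₀ := Real.sq_sqrt hg0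
    have hexp2 : (Real.exp (-β'*r))^2 = Real.exp (-(2*β'*r)) := by
      rw [← Real.exp_nat_mul]; ring_nf
    have hEp : 0 < Real.exp (2*β'*r) := Real.exp_pos _
    rw [mul_pow, hsq, hexp2]
    have h := mul_le_mul_of_nonneg_right h2 (Real.exp_pos (-(2*β'*r))).le
    have hmul : Real.exp (2*β'*r) * Real.exp (-(2*β'*r)) = 1 := by
      rw [← Real.exp_add]; simp
    nlinarith [h, hmul]
  calc |lam r - 1| = Real.sqrt ((lam r - 1)^2) := (Real.sqrt_sq_eq_abs _).symm
    _ ≤ Real.sqrt ((Real.sqrt (g r₀) * Real.exp (-β'*r))^2) := Real.sqrt_le_sqrt h3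
    _ = Real.sqrt (g r₀) * Real.exp (-β'*r) := Real.sqrt_sq (by positivity)
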